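/- Let E, F be dyadic wavelet sets and for n, k ∈ ℤ set E_{n,k} = E ∩ (F − 2nπ) ∩ 2^{-k}F. Then (E, F) is an interpolation pair if and only if for all nonzero integers n, k, m, l: whenever E_{n,k} ∩ (2^l E_{m,l} − 2nπ) has positive Lebesgue measure, one has n + 2^l·m = 0. Furthermore, for any such quadruple (n,k,m,l) with E_{n,k} ∩ (2^l E_{m,l} − 2nπ) of positive measure, one also has k = −l. -/
import Mathlib


open MeasureTheory Set
open scoped Real symmDiff

noncomputable section

/-- An a.e. (modulo Lebesgue-null sets) partition of the set `A` by the family `P`. -/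
def IsAEPartition {ι : Type*} (P : ι → Set ℝ) (A : Set ℝ) : Prop :=
  volume (A ∆ (⋃ i, P i)) = 0 ∧ ∀ i j : ι, i ≠ j → volume (P i ∩ P j) = 0

/-- `E ⊆ ℝ` is a dyadic wavelet set: its `2πℤ`-translates and its `2ℤ`-dilates each
partition `ℝ` modulo Lebesgue-null sets. -/
def IsDyadicWaveletSet (E : Set ℝ) : Prop :=
  MeasurableSet E ∧
  (∀ᵐ x : ℝ ∂volume, ∃! n : ℤ, x + 2 * Real.pi * n ∈ E) ∧
  (∀ᵐ x : ℝ ∂volume, ∃! k : ℤ, (2 : ℝ) ^ k * x ∈ E)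

/-- `σ` is (a representative of) the interpolation map `σ_E^F` for wavelet sets `E, F`. -/
def IsInterpolationMap (E F : Set ℝ) (σ : ℝ → ℝ) : Prop :=
  Measurable σ ∧ σ 0 = 0 ∧
  (∀ᵐ s : ℝ ∂volume, s ∈ E → σ s ∈ F ∧ ∃ n : ℤ, σ s - s = 2 * Real.pi * n) ∧
  (∀ n : ℤ, ∀ᵐ s : ℝ ∂volume, (2 : ℝ) ^ (-n) * s ∈ E →
    σ s = (2 : ℝ) ^ n * σ ((2 : ℝ) ^ (-n) * s))

/-- The `2π`-congruence domain of a map `σ`. -/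
def CongruenceDomain (σ : ℝ → ℝ) : Set ℝ :=
  {s : ℝ | ∃ n : ℤ, σ s - s = 2 * Real.pi * n}

/-- `A` is `2π`-translation congruent to `B`. -/
def TransCongruent (A B : Set ℝ) : Prop :=
  ∃ P : ℤ → Set ℝ, (∀ n, MeasurableSet (P n)) ∧ IsAEPartition P A ∧
    IsAEPartition (fun (n : ℤ) => (fun x => x + 2 * Real.pi * (n : ℝ)) '' P n) B

/-- `A` is `2`-dilation congruent to `B`. -/
def DilCongruent (A B : Set ℝ) : Prop :=
  ∃ P : ℤ → Set ℝ, (∀ n, MeasurableSet (P n)) ∧ IsAEPartition P A ∧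
    IsAEPartition (fun (n : ℤ) => (fun x => (2 : ℝ) ^ n * x) '' P n) B

/-- `E_{n,k} = E ∩ (F − 2nπ) ∩ 2^{-k}F`. -/
def Enk (E F : Set ℝ) (n k : ℤ) : Set ℝ :=
  E ∩ {x : ℝ | x + 2 * Real.pi * n ∈ F} ∩ {x : ℝ | (2 : ℝ) ^ k * x ∈ F}

/-- `E_{n,k} ∩ (2^l E_{m,l} − 2nπ)`. -/
def EnkTest (E F : Set ℝ) (n k m l : ℤ) : Set ℝ :=
  Enk E F n k ∩ {x : ℝ | (2 : ℝ) ^ (-l) * (x + 2 * Real.pi * n) ∈ Enk E F m l}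

lemma ae_comp_affine {P : ℝ → Prop} (h : ∀ᵐ t : ℝ ∂volume, P t) (c : ℝ) (hc : c ≠ 0) (d : ℝ) :
    ∀ᵐ s : ℝ ∂volume, P (c * s + d) := by
  rw [ae_iff] at h ⊢
  have : {s : ℝ | ¬ P (c * s + d)} = (c * ·) ⁻¹' ((· + d) ⁻¹' {t | ¬ P t}) := rfl
  rw [this, Real.volume_preimage_mul_left hc, measure_preimage_add_right volume d, h, mul_zero]

/-- All the pointwise facts we need at a point `t`. -/
def Good (E F : Set ℝ) (σ : ℝ → ℝ) (t : ℝ) : Prop :=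
  (t ∈ E → σ t ∈ F ∧ ∃ n : ℤ, σ t - t = 2 * Real.pi * n) ∧
  (∀ c : ℤ, (2 : ℝ) ^ (-c) * t ∈ E → σ t = (2 : ℝ) ^ c * σ ((2 : ℝ) ^ (-c) * t)) ∧
  (∃! n : ℤ, t + 2 * Real.pi * n ∈ F) ∧
  (∃! j : ℤ, (2 : ℝ) ^ j * t ∈ F) ∧
  (∃! n : ℤ, t + 2 * Real.pi * n ∈ E) ∧
  (∃! j : ℤ, (2 : ℝ) ^ j * t ∈ E) ∧
  (∀ n k m l : ℤ, volume (EnkTest E F n k m l) = 0 → t ∉ EnkTest E F n k m l)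

lemma good_ae (E F : Set ℝ) (hE : IsDyadicWaveletSet E) (hF : IsDyadicWaveletSet F)
    (σ : ℝ → ℝ) (hσ : IsInterpolationMap E F σ) :
    ∀ᵐ t : ℝ ∂volume, Good E F σ t := by
  have h2 : ∀ᵐ t : ℝ ∂volume, ∀ c : ℤ, (2 : ℝ) ^ (-c) * t ∈ E →
      σ t = (2 : ℝ) ^ c * σ ((2 : ℝ) ^ (-c) * t) := ae_all_iff.mpr hσ.2.2.2
  have h7 : ∀ᵐ t : ℝ ∂volume, ∀ n k m l : ℤ,
      volume (EnkTest E F n k m l) = 0 → t ∉ EnkTest E F n k m l := by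
    rw [ae_all_iff]; intro n; rw [ae_all_iff]; intro k; rw [ae_all_iff]; intro m
    rw [ae_all_iff]; intro l
    by_cases hv : volume (EnkTest E F n k m l) = 0
    · filter_upwards [measure_eq_zero_iff_ae_notMem.mp hv] with t ht _ using ht
    · filter_upwards with t hv' using absurd hv' hv
  filter_upwards [hσ.2.2.1, h2, hF.2.1, hF.2.2, hE.2.1, hE.2.2, h7] with t a1 a2 a3 a4 a5 a6 a7
  exact ⟨a1, a2, a3, a4, a5, a6, a7⟩

lemma goodAff_ae (E F : Set ℝ) (hE : IsDyadicWaveletSet E) (hF : IsDyadicWaveletSet F)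
    (σ : ℝ → ℝ) (hσ : IsInterpolationMap E F σ) :
    ∀ᵐ s : ℝ ∂volume, ∀ (a : ℤ) (q : ℚ), Good E F σ ((2 : ℝ) ^ a * s + 2 * Real.pi * q) := by
  rw [ae_all_iff]; intro a; rw [ae_all_iff]; intro q
  exact ae_comp_affine (good_ae E F hE hF σ hσ) _ (zpow_ne_zero a two_ne_zero) _

lemma two_zpow_mul_neg (l : ℤ) : (2:ℝ)^l * (2:ℝ)^(-l) = 1 := by
  rw [← zpow_add₀ (two_ne_zero), add_neg_cancel, zpow_zero]

lemma fwd (E F : Set ℝ) (σ : ℝ → ℝ) (n k m l : ℤ) (s : ℝ)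
    (H : ∀ (a : ℤ) (q : ℚ), Good E F σ ((2 : ℝ) ^ a * s + 2 * Real.pi * q))
    (hs : s ∈ EnkTest E F n k m l) (hid : σ (σ s) = s) :
    (n : ℝ) + (2 : ℝ) ^ l * m = 0 ∧ k = -l := by
  obtain ⟨⟨⟨hsE, hnF⟩, hkF⟩, ⟨⟨huE, humF⟩, hulF⟩⟩ := hs
  have Hs : Good E F σ s := by simpa using H 0 0
  have Ht : Good E F σ (s + 2 * Real.pi * n) := by
    have := H 0 (n : ℚ)
    have e : (2:ℝ)^(0:ℤ) * s + 2 * Real.pi * (((n : ℚ) : ℝ)) = s + 2 * Real.pi * n := by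
      push_cast; ring
    rwa [e] at this
  have Hu : Good E F σ ((2:ℝ)^(-l) * (s + 2 * Real.pi * n)) := by
    have := H (-l) ((n : ℚ) * 2 ^ (-l))
    have e : (2:ℝ)^(-l) * s + 2 * Real.pi * (((n : ℚ) * 2 ^ (-l) : ℚ) : ℝ)
        = (2:ℝ)^(-l) * (s + 2 * Real.pi * n) := by push_cast; ring
    rwa [e] at this
  set u : ℝ := (2:ℝ)^(-l) * (s + 2 * Real.pi * n) with hu_def
  obtain ⟨hσsF, n', hn'⟩ := Hs.1 hsE
  have hσs : σ s = s + 2 * Real.pi * n' := by linarith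
  have hn'n : n' = n := Hs.2.2.1.unique (by rw [← hσs]; exact hσsF) hnF
  rw [hn'n] at hσs
  obtain ⟨hσuF, m', hm'⟩ := Hu.1 huE
  have hσu : σ u = u + 2 * Real.pi * m' := by linarith
  have hm'm : m' = m := Hu.2.2.1.unique (by rw [← hσu]; exact hσuF) humF
  rw [hm'm] at hσu
  have hσt : σ (s + 2 * Real.pi * n) = (2:ℝ)^l * σ u := Ht.2.1 l huE
  rw [hσs, hσt, hσu] at hid
  have hz := two_zpow_mul_neg l
  have h1 : (n : ℝ) + (2:ℝ)^l * m = 0 := by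
    have h2π : 2 * Real.pi * ((n:ℝ) + (2:ℝ)^l * m) = 0 := by
      rw [hu_def] at hid
      linear_combination hid - (s + 2 * Real.pi * n) * hz
    have := mul_ne_zero (two_ne_zero (α := ℝ)) Real.pi_ne_zero
    rcases mul_eq_zero.mp h2π with h | h
    · exact absurd h this
    · exact h
  refine ⟨h1, ?_⟩
  have hF2 : (2:ℝ)^(-l) * s ∈ F := by
    have e : u + 2 * Real.pi * m = (2:ℝ)^(-l) * s := by
      rw [hu_def]
      have h3 : (2:ℝ)^(-l) * ((n:ℝ) + (2:ℝ)^l * m) = 0 := by rw [h1, mul_zero]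
      linear_combination 2 * Real.pi * h3 - 2 * Real.pi * (m:ℝ) * hz
    have humF' : u + 2 * Real.pi * m ∈ F := humF
    rwa [e] at humF'
  exact Hs.2.2.2.1.unique hkF hF2

lemma two_zpow_neg_mul (l : ℤ) : (2:ℝ)^(-l) * (2:ℝ)^l = 1 := by
  rw [← zpow_add₀ (two_ne_zero), neg_add_cancel, zpow_zero]

lemma bwd (E F : Set ℝ) (σ : ℝ → ℝ)
    (hC : ∀ n k m l : ℤ, n ≠ 0 → k ≠ 0 → m ≠ 0 → l ≠ 0 →
      0 < volume (EnkTest E F n k m l) → (n : ℝ) + (2:ℝ)^l * m = 0)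
    (s : ℝ)
    (H : ∀ (a : ℤ) (q : ℚ), Good E F σ ((2 : ℝ) ^ a * s + 2 * Real.pi * q)) :
    σ (σ s) = s := by
  have Hs : Good E F σ s := by simpa using H 0 0
  obtain ⟨j, hjE, -⟩ := Hs.2.2.2.2.2.1
  have Hs' : Good E F σ ((2:ℝ)^j * s) := by simpa using H j 0
  set s' : ℝ := (2:ℝ)^j * s with hs'def
  obtain ⟨n, hnF, hnuniq⟩ := Hs'.2.2.1
  obtain ⟨hσs'F, n', hn'⟩ := Hs'.1 hjE
  have hσs' : σ s' = s' + 2 * Real.pi * n' := by linarith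
  have hn'n : n' = n := hnuniq n' (by show s' + 2 * Real.pi * (n' : ℝ) ∈ F; rw [← hσs']; exact hσs'F)
  rw [hn'n] at hσs'
  set t : ℝ := s' + 2 * Real.pi * n with htdef
  have Ht : Good E F σ t := by
    have h0 := H j (n : ℚ)
    have e : (2:ℝ)^j * s + 2 * Real.pi * (((n:ℚ)):ℝ) = t := by
      rw [htdef, hs'def]; push_cast; ring
    rwa [e] at h0
  obtain ⟨j', hj'E, -⟩ := Ht.2.2.2.2.2.1
  set u : ℝ := (2:ℝ)^j' * t with hudef
  have Hu : Good E F σ u := by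
    have h0 := H (j' + j) ((n:ℚ) * 2^j')
    have e : (2:ℝ)^(j'+j) * s + 2*Real.pi*(((n:ℚ)*2^j' : ℚ):ℝ) = u := by
      rw [hudef, htdef, hs'def, zpow_add₀ (two_ne_zero : (2:ℝ) ≠ 0)]; push_cast; ring
    rwa [e] at h0
  obtain ⟨m, hmF, hmuniq⟩ := Hu.2.2.1
  obtain ⟨hσuF, m', hm'⟩ := Hu.1 hj'E
  have hσu : σ u = u + 2*Real.pi*m' := by linarith
  have hm'm : m' = m := hmuniq m' (by show u + 2 * Real.pi * (m' : ℝ) ∈ F; rw [← hσu]; exact hσuF)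
  rw [hm'm] at hσu
  obtain ⟨k, hkF, -⟩ := Hs'.2.2.2.1
  -- membership of s' in EnkTest E F n k m (-j')
  have hmem : s' ∈ EnkTest E F n k m (-j') := by
    refine ⟨⟨⟨hjE, hnF⟩, hkF⟩, ?_⟩
    show (2:ℝ)^(-(-j')) * (s' + 2*Real.pi*(n:ℝ)) ∈ Enk E F m (-j')
    have e0 : (2:ℝ)^(-(-j')) * (s' + 2*Real.pi*(n:ℝ)) = u := by
      rw [neg_neg, hudef, htdef]
    rw [e0]
    refine ⟨⟨hj'E, hmF⟩, ?_⟩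
    show (2:ℝ)^(-j') * u ∈ F
    have e1 : (2:ℝ)^(-j') * u = t := by
      rw [hudef, ← mul_assoc, two_zpow_neg_mul, one_mul]
    rw [e1]; exact hnF
  -- the case analysis
  have hzn : j' = 0 → n = 0 := by
    intro h0
    have htE : t ∈ E := by
      simpa [hudef, h0] using hj'E
    have p1 : s' + 2*Real.pi*((n:ℤ):ℝ) ∈ E := htE
    have p2 : s' + 2*Real.pi*((0:ℤ):ℝ) ∈ E := by push_cast; simpa using hjE
    exact Hs'.2.2.2.2.1.unique p1 p2
  have hn0 : n = 0 → j' = 0 ∧ m = 0 := by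
    intro h0
    have hts' : t = s' := by rw [htdef, h0]; push_cast; ring
    have q1 : (2:ℝ)^((0:ℤ)) * u ∈ E := by simpa using hj'E
    have q2 : (2:ℝ)^(-j') * u ∈ E := by
      have e1 : (2:ℝ)^(-j') * u = t := by rw [hudef, ← mul_assoc, two_zpow_neg_mul, one_mul]
      rw [e1, hts']; exact hjE
    have hj'0 : (0:ℤ) = -j' := Hu.2.2.2.2.2.1.unique q1 q2
    have hj'0' : j' = 0 := by omega
    refine ⟨hj'0', ?_⟩
    have hs'm : s' + 2*Real.pi*((m:ℤ):ℝ) ∈ F := by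
      have : u = s' := by rw [hudef, hj'0', hts']; simp
      rwa [this] at hmF
    have := hnuniq m hs'm
    omega
  have hm0 : m = 0 → n = 0 := by
    intro h0
    have quF : (2:ℝ)^((0:ℤ)) * u ∈ F := by
      have : u + 2*Real.pi*((m:ℤ):ℝ) ∈ F := hmF
      rw [h0] at this; push_cast at this; simpa using this
    have qtF : (2:ℝ)^(-j') * u ∈ F := by
      have e1 : (2:ℝ)^(-j') * u = t := by rw [hudef, ← mul_assoc, two_zpow_neg_mul, one_mul]
      rw [e1]; exact hnF
    have h1 : (0:ℤ) = -j' := Hu.2.2.2.1.unique quF qtF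
    have : j' = 0 := by omega
    exact hzn this
  have hk0 : k = 0 → n = 0 := by
    intro h0
    have p1 : s' + 2*Real.pi*((0:ℤ):ℝ) ∈ F := by
      have : (2:ℝ)^k * s' ∈ F := hkF
      rw [h0] at this; push_cast; simpa using this
    have := hnuniq 0 p1
    omega
  have claim : (n:ℝ) + (2:ℝ)^(-j') * m = 0 := by
    by_cases hn : n = 0
    · obtain ⟨hj'0, hm0'⟩ := hn0 hn
      rw [hn, hm0', hj'0]; simp
    · have hm : m ≠ 0 := fun h => hn (hm0 h)
      have hk : k ≠ 0 := fun h => hn (hk0 h)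
      have hj'ne : j' ≠ 0 := fun h => hn (hzn h)
      have hpos : 0 < volume (EnkTest E F n k m (-j')) := by
        rw [pos_iff_ne_zero]
        intro h0
        exact Hs'.2.2.2.2.2.2 n k m (-j') h0 hmem
      exact hC n k m (-j') hn hk hm (neg_ne_zero.mpr hj'ne) hpos
  -- final computation
  have hσs : σ s = (2:ℝ)^(-j) * σ s' := by
    have h0 := Hs.2.1 (-j) (by rw [neg_neg]; exact hjE)
    rwa [neg_neg] at h0
  set w : ℝ := (2:ℝ)^(-j) * t with hwdef
  have hσs2 : σ s = w := by rw [hσs, hσs', hwdef]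
  have Hw : Good E F σ w := by
    have h0 := H 0 ((n:ℚ) * 2^(-j))
    have e : (2:ℝ)^((0:ℤ)) * s + 2*Real.pi*(((n:ℚ)*2^(-j) : ℚ):ℝ) = w := by
      rw [hwdef, htdef, hs'def]; push_cast
      have hz := two_zpow_neg_mul j
      linear_combination (-s) * hz
    rwa [e] at h0
  have hσw : σ w = (2:ℝ)^(-(j'+j)) * σ u := by
    have e : (2:ℝ)^(-(-(j'+j))) * w = u := by
      rw [neg_neg, hwdef, zpow_add₀ (two_ne_zero : (2:ℝ) ≠ 0), hudef]
      have hz := two_zpow_mul_neg j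
      linear_combination ((2:ℝ)^j' * t) * hz
    have h0 := Hw.2.1 (-(j'+j)) (by rw [e]; exact hj'E)
    rwa [e] at h0
  rw [hσs2, hσw, hσu]
  rw [hudef, htdef, hs'def, neg_add, zpow_add₀ (two_ne_zero : (2:ℝ) ≠ 0)]
  have hzj := two_zpow_mul_neg j
  have hzj' := two_zpow_mul_neg j'
  linear_combination (2*Real.pi*(2:ℝ)^(-j)) * claim +
    (2*Real.pi*(n:ℝ)*(2:ℝ)^(-j) + s*((2:ℝ)^j*(2:ℝ)^(-j))) * hzj' + s * hzj


/-- Theorem 3(i) of the paper.  `(E, F)` is an interpolation pair iff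
whenever `E_{n,k} ∩ (2^l E_{m,l} − 2nπ)` has positive measure for nonzero integers
`n, k, m, l`, one has `n + 2^l·m = 0`; furthermore for any such quadruple one also
has `k = −l`. -/
theorem stmt_6 (E F : Set ℝ) (hE : IsDyadicWaveletSet E) (hF : IsDyadicWaveletSet F)
    (σ : ℝ → ℝ) (hσ : IsInterpolationMap E F σ) :
    ((∀ᵐ s : ℝ ∂volume, σ (σ s) = s) ↔
      (∀ n k m l : ℤ, n ≠ 0 → k ≠ 0 → m ≠ 0 → l ≠ 0 →
        0 < volume (EnkTest E F n k m l) → (n : ℝ) + (2 : ℝ) ^ l * m = 0)) ∧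
    ((∀ᵐ s : ℝ ∂volume, σ (σ s) = s) →
      ∀ n k m l : ℤ, n ≠ 0 → k ≠ 0 → m ≠ 0 → l ≠ 0 →
        0 < volume (EnkTest E F n k m l) → k = -l) := by
  have hGA := goodAff_ae E F hE hF σ hσ
  have exists_pt : ∀ (S : Set ℝ), 0 < volume S → (∀ᵐ s : ℝ ∂volume, σ (σ s) = s) →
      ∃ s ∈ S, (∀ (a : ℤ) (q : ℚ), Good E F σ ((2 : ℝ) ^ a * s + 2 * Real.pi * q)) ∧
        σ (σ s) = s := by
    intro S hpos hid
    by_contra hcon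
    push_neg at hcon
    have hae := hGA.and hid
    have hsub : S ⊆ {s : ℝ | ¬ ((∀ (a : ℤ) (q : ℚ),
        Good E F σ ((2 : ℝ) ^ a * s + 2 * Real.pi * q)) ∧ σ (σ s) = s)} := by
      intro x hx
      simp only [mem_setOf_eq, not_and]
      exact hcon x hx
    exact absurd (measure_mono_null hsub (ae_iff.mp hae)) (ne_of_gt hpos)
  refine ⟨⟨?_, ?_⟩, ?_⟩
  · intro hid n k m l hn hk hm hl hpos
    obtain ⟨s, hsS, hG, hids⟩ := exists_pt _ hpos hid
    exact (fwd E F σ n k m l s hG hsS hids).1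
  · intro hC
    filter_upwards [hGA] with s hs
    exact bwd E F σ hC s hs
  · intro hid n k m l _ _ _ _ hpos
    obtain ⟨s, hsS, hG, hids⟩ := exists_pt _ hpos hid
    exact (fwd E F σ n k m l s hG hsS hids).2
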